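/- Let X be a random vector in ℝ^p, m : ℝ^p → ℝ with m(X) square-integrable, and m_{−j}(X^{−j}) := E[m(X) | X^{−j}]. Let X̃_i and X̃_k (i ≠ k) be two conditional resamples of coordinate j of X: X̃_i^{−j} = X̃_k^{−j} = X^{−j}, and conditionally on X^{−j} the coordinates X̃_i^j and X̃_k^j are i.i.d. with the conditional law of X^j given X^{−j} and conditionally independent of X^j. Then E[(m(X) − m(X̃_i))(m(X) − m(X̃_k))] = ψ_TSI(j), where ψ_TSI(j) = E[(m(X) − m_{−j}(X^{−j}))²]. -/

import Mathlib

open MeasureTheory ProbabilityTheory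

noncomputable section

section Auxiliary

open Set

lemma memℒp_two_condexp_aux {α : Type*} {m m0 : MeasurableSpace α} (hm : m ≤ m0)
    {μ : Measure α} [IsFiniteMeasure μ] {f : α → ℝ} (hf : MemLp f 2 μ) :
    MemLp (μ[f|m]) 2 μ := by
  haveI : SigmaFinite (μ.trim hm) := by
    have := Fact.mk hm
    infer_instance
  set g : α →₂[μ] ℝ := (condExpL2 ℝ ℝ hm (hf.toLp f) : α →₂[μ] ℝ) with hg
  have hgm : AEStronglyMeasurable[m] (g : α → ℝ) μ := lpMeas.aestronglyMeasurable _
  have hgmem : MemLp (g : α → ℝ) 2 μ := Lp.memLp _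
  have heq : (g : α → ℝ) =ᵐ[μ] μ[f|m] := by
    refine ae_eq_condExp_of_forall_setIntegral_eq hm (hf.integrable one_le_two)
      (fun s _ _ => (hgmem.integrable one_le_two).integrableOn) (fun s hs hμs => ?_) hgm
    rw [integral_condExpL2_eq hm (hf.toLp f) hs hμs.ne]
    exact setIntegral_congr_ae (hm s hs) ((hf.coeFn_toLp).mono fun x hx _ => hx)
  exact hgmem.ae_eq heq

lemma isCountablySpanning_Iic_rat_aux : IsCountablySpanning (⋃ q : ℚ, {Iic (q : ℝ)}) := by
  refine ⟨fun n => Iic ((n : ℚ) : ℝ), fun n => mem_iUnion.2 ⟨n, rfl⟩, ?_⟩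
  ext x
  simp only [mem_iUnion, mem_Iic, mem_univ, iff_true]
  obtain ⟨n, hn⟩ := exists_nat_ge x
  exact ⟨n, by exact_mod_cast hn⟩

lemma condDistrib_prod_of_condIndepFun_aux {Ω β : Type*} [mΩ : MeasurableSpace Ω]
    [StandardBorelSpace Ω] {mβ : MeasurableSpace β}
    (P : Measure Ω) [IsProbabilityMeasure P] {W : Ω → β} {Y Z : Ω → ℝ}
    (hW : Measurable W) (hY : Measurable Y) (hZ : Measurable Z)
    (hle : mβ.comap W ≤ mΩ)
    (h : CondIndepFun (mβ.comap W) hle Y Z P) :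
    ∀ᵐ x ∂(P.map W), condDistrib (fun ω => (Y ω, Z ω)) W P x
      = (condDistrib Y W P x).prod (condDistrib Z W P x) := by
  have key : ∀ (s t : Set ℝ), MeasurableSet s → MeasurableSet t →
      ∀ᵐ x ∂(P.map W), condDistrib (fun ω => (Y ω, Z ω)) W P x (s ×ˢ t)
        = condDistrib Y W P x s * condDistrib Z W P x t := by
    intro s t hs ht
    have h1 := condDistrib_ae_eq_condExp (μ := P) hW (hY.prodMk hZ) (hs.prod ht)
    have h2 := condDistrib_ae_eq_condExp (μ := P) hW hY hs
    have h3 := condDistrib_ae_eq_condExp (μ := P) hW hZ ht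
    have h4 := (condIndepFun_iff_condExp_inter_preimage_eq_mul hY hZ).1 h s t hs ht
    have hpre : (fun ω => (Y ω, Z ω)) ⁻¹' (s ×ˢ t) = Y ⁻¹' s ∩ Z ⁻¹' t := by
      ext ω; simp [Set.mem_prod]
    rw [hpre] at h1
    have hae : ∀ᵐ ω ∂P, condDistrib (fun ω => (Y ω, Z ω)) W P (W ω) (s ×ˢ t)
        = condDistrib Y W P (W ω) s * condDistrib Z W P (W ω) t := by
      filter_upwards [h1, h2, h3, h4] with ω e1 e2 e3 e4
      have hR : (condDistrib (fun ω => (Y ω, Z ω)) W P (W ω) (s ×ˢ t)).toReal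
          = ((condDistrib Y W P (W ω) s) * (condDistrib Z W P (W ω) t)).toReal := by
        rw [ENNReal.toReal_mul, ← measureReal_def, ← measureReal_def, ← measureReal_def, e1, e2, e3, e4]
      exact (ENNReal.toReal_eq_toReal_iff' (measure_ne_top _ _)
        (ENNReal.mul_ne_top (measure_ne_top _ _) (measure_ne_top _ _))).1 hR
    refine (ae_map_iff hW.aemeasurable ?_).2 hae
    exact measurableSet_eq_fun (Kernel.measurable_coe _ (hs.prod ht))
      ((Kernel.measurable_coe _ hs).mul (Kernel.measurable_coe _ ht))
  have hind : ∀ᵐ x ∂(P.map W), ∀ ⦃t : Set (ℝ × ℝ)⦄, MeasurableSet t →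
      condDistrib (fun ω => (Y ω, Z ω)) W P x t
        = ((condDistrib Y W P x).prod (condDistrib Z W P x)) t := by
    apply MeasurableSpace.ae_induction_on_inter
      (generateFrom_eq_prod Real.borel_eq_generateFrom_Iic_rat.symm
        Real.borel_eq_generateFrom_Iic_rat.symm
        isCountablySpanning_Iic_rat_aux isCountablySpanning_Iic_rat_aux).symm
      (Real.isPiSystem_Iic_rat.prod Real.isPiSystem_Iic_rat)
    · exact Filter.Eventually.of_forall fun x => by simp
    · have : ∀ᵐ x ∂(P.map W), ∀ (q r : ℚ),
          condDistrib (fun ω => (Y ω, Z ω)) W P x (Iic (q:ℝ) ×ˢ Iic (r:ℝ))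
            = ((condDistrib Y W P x).prod (condDistrib Z W P x)) (Iic (q:ℝ) ×ˢ Iic (r:ℝ)) := by
        rw [ae_all_iff]
        intro q
        rw [ae_all_iff]
        intro r
        filter_upwards [key (Iic (q:ℝ)) (Iic (r:ℝ)) measurableSet_Iic measurableSet_Iic]
          with x hx
        rw [hx, Measure.prod_prod]
      filter_upwards [this] with x hx t ht
      simp only [Set.mem_image2, mem_iUnion, Set.mem_singleton_iff] at ht
      obtain ⟨s₁, ⟨q, rfl⟩, s₂, ⟨r, rfl⟩, rfl⟩ := ht
      exact hx q r
    · refine Filter.Eventually.of_forall fun x t htm hC => ?_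
      rw [measure_compl htm (measure_ne_top _ _), measure_compl htm (measure_ne_top _ _), hC]
      congr 1
      · rw [measure_univ, measure_univ]
    · refine Filter.Eventually.of_forall fun x f hdisj hfm hC => ?_
      rw [measure_iUnion hdisj hfm, measure_iUnion hdisj hfm]
      exact tsum_congr hC
  filter_upwards [hind] with x hx
  exact Measure.ext fun s hs => hx hs

lemma map_prod_eq_of_condDistrib_eq_aux {Ω β : Type*} [mΩ : MeasurableSpace Ω]
    [StandardBorelSpace Ω] {mβ : MeasurableSpace β}
    (P : Measure Ω) [IsProbabilityMeasure P] {W : Ω → β} {A Y : Ω → ℝ}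
    (hA : Measurable A) (hY : Measurable Y)
    (hcl : condDistrib A W P =ᵐ[P.map W] condDistrib Y W P) :
    P.map (fun ω => (W ω, A ω)) = P.map (fun ω => (W ω, Y ω)) := by
  have hdA : P.map (fun ω => (W ω, A ω)) = (P.map W) ⊗ₘ condDistrib A W P := by
    rw [condDistrib, ← Measure.fst_map_prodMk₀ (X := W) hA.aemeasurable,
      (P.map (fun ω => (W ω, A ω))).disintegrate _]
  have hdY : P.map (fun ω => (W ω, Y ω)) = (P.map W) ⊗ₘ condDistrib Y W P := by
    rw [condDistrib, ← Measure.fst_map_prodMk₀ (X := W) hY.aemeasurable,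
      (P.map (fun ω => (W ω, Y ω))).disintegrate _]
  rw [hdA, hdY, Measure.compProd_congr hcl]

lemma integrable_mul_of_memℒp_two_aux {Ω : Type*} [MeasurableSpace Ω] {P : Measure Ω}
    {f g : Ω → ℝ} (hf : MemLp f 2 P) (hg : MemLp g 2 P) :
    Integrable (fun ω => f ω * g ω) P := by
  refine (hf.integrable_sq.add hg.integrable_sq).mono'
    (hf.1.mul hg.1) (Filter.Eventually.of_forall fun ω => ?_)
  simp only [Pi.add_apply, Real.norm_eq_abs, abs_mul]
  nlinarith [sq_nonneg (|f ω| - |g ω|), sq_abs (f ω), sq_abs (g ω), abs_nonneg (f ω),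
    abs_nonneg (g ω)]

lemma memℒp_two_resample_aux {Ω β : Type*} [mΩ : MeasurableSpace Ω]
    [StandardBorelSpace Ω] {mβ : MeasurableSpace β}
    (P : Measure Ω) [IsProbabilityMeasure P] {W : Ω → β} {A Y : Ω → ℝ}
    (hW : Measurable W) (hA : Measurable A) (hY : Measurable Y)
    (hcl : condDistrib A W P =ᵐ[P.map W] condDistrib Y W P)
    {f : β × ℝ → ℝ} (hf : StronglyMeasurable f)
    (hfL2 : MemLp (fun ω => f (W ω, Y ω)) 2 P) :
    MemLp (fun ω => f (W ω, A ω)) 2 P := by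
  have hfL2' : MemLp f 2 (P.map (fun ω => (W ω, Y ω))) := by
    rw [memLp_map_measure_iff hf.aestronglyMeasurable (hW.prodMk hY).aemeasurable]
    exact hfL2
  rw [← map_prod_eq_of_condDistrib_eq_aux P hA hY hcl,
    memLp_map_measure_iff hf.aestronglyMeasurable (hW.prodMk hA).aemeasurable] at hfL2'
  exact hfL2'

lemma cross_term_eq_aux {Ω β : Type*} [mΩ : MeasurableSpace Ω]
    [StandardBorelSpace Ω] {mβ : MeasurableSpace β}
    (P : Measure Ω) [IsProbabilityMeasure P] {W : Ω → β} {A B Y : Ω → ℝ}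
    (hW : Measurable W) (hA : Measurable A) (hB : Measurable B) (hY : Measurable Y)
    (hle : mβ.comap W ≤ mΩ)
    (hind : CondIndepFun (mβ.comap W) hle A B P)
    (hclA : condDistrib A W P =ᵐ[P.map W] condDistrib Y W P)
    (hclB : condDistrib B W P =ᵐ[P.map W] condDistrib Y W P)
    {f : β × ℝ → ℝ} (hf : StronglyMeasurable f)
    (hfL2 : MemLp (fun ω => f (W ω, Y ω)) 2 P) :
    ∫ ω, f (W ω, A ω) * f (W ω, B ω) ∂P
      = ∫ ω, (∫ y, f (W ω, y) ∂(condDistrib Y W P (W ω))) ^ 2 ∂P := by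
  haveI : SigmaFinite (P.trim hle) := by
    have := Fact.mk hle
    infer_instance
  have hL2A : MemLp (fun ω => f (W ω, A ω)) 2 P :=
    memℒp_two_resample_aux P hW hA hY hclA hf hfL2
  have hL2B : MemLp (fun ω => f (W ω, B ω)) 2 P :=
    memℒp_two_resample_aux P hW hB hY hclB hf hfL2
  have hint : Integrable (fun ω => f (W ω, A ω) * f (W ω, B ω)) P :=
    integrable_mul_of_memℒp_two_aux hL2A hL2B
  set F : β × (ℝ × ℝ) → ℝ := fun q => f (q.1, q.2.1) * f (q.1, q.2.2) with hF
  have hFsm : StronglyMeasurable F :=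
    (hf.comp_measurable (measurable_fst.prodMk (measurable_fst.comp measurable_snd))).mul
      (hf.comp_measurable (measurable_fst.prodMk (measurable_snd.comp measurable_snd)))
  have hce := condExp_prod_ae_eq_integral_condDistrib (μ := P) hW
    (hA.prodMk hB).aemeasurable hFsm hint
  have hkerP := ae_of_ae_map hW.aemeasurable
    (condDistrib_prod_of_condIndepFun_aux P hW hA hB hle hind)
  have hclAP := ae_of_ae_map hW.aemeasurable hclA
  have hclBP := ae_of_ae_map hW.aemeasurable hclB
  have hce2 : P[(fun ω => F (W ω, (A ω, B ω))) | mβ.comap W]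
      =ᵐ[P] fun ω => (∫ y, f (W ω, y) ∂(condDistrib Y W P (W ω))) ^ 2 := by
    filter_upwards [hce, hkerP, hclAP, hclBP] with ω h1 h2 h3 h4
    rw [h1, h2]
    have : ∫ z, F (W ω, z)
        ∂((condDistrib A W P (W ω)).prod (condDistrib B W P (W ω)))
        = (∫ y, f (W ω, y) ∂(condDistrib A W P (W ω)))
          * (∫ y, f (W ω, y) ∂(condDistrib B W P (W ω))) :=
      integral_prod_mul (μ := condDistrib A W P (W ω))
        (ν := condDistrib B W P (W ω)) (fun y => f (W ω, y)) (fun y => f (W ω, y))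
    rw [this, h3, h4, sq]
  calc ∫ ω, f (W ω, A ω) * f (W ω, B ω) ∂P
      = ∫ ω, (P[(fun ω => F (W ω, (A ω, B ω))) | mβ.comap W]) ω ∂P :=
        (integral_condExp hle).symm
    _ = ∫ ω, (∫ y, f (W ω, y) ∂(condDistrib Y W P (W ω))) ^ 2 ∂P :=
        integral_congr_ae hce2

end Auxiliary

/-- cross term of two distinct conditional resamples: if `X̃ᵢ` and `X̃ₖ`
agree with `X` off coordinate `j`, have conditionally on `X^{-j}` the conditional law of
`X^j`, and the three coordinates `X^j, X̃ᵢ^j, X̃ₖ^j` are mutually conditionally independent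
given `X^{-j}`, then `E[(m(X) - m(X̃ᵢ)) (m(X) - m(X̃ₖ))] = ψ_TSI(j)` where
`ψ_TSI(j) = E[(m(X) - E[m(X) | X^{-j}])²]`. -/
theorem cpi_cross_term_tsi
    {Ω : Type*} [mΩ : MeasurableSpace Ω] [StandardBorelSpace Ω]
    (P : Measure Ω) [IsProbabilityMeasure P]
    {p : ℕ} (j : Fin p) (X Xti Xtk : Ω → Fin p → ℝ)
    (hX : Measurable X) (hXti : Measurable Xti) (hXtk : Measurable Xtk)
    (m : (Fin p → ℝ) → ℝ) (hm : Measurable m)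
    (hmL2 : MemLp (fun ω => m (X ω)) 2 P)
    (hagreei : ∀ ω, ∀ l, l ≠ j → Xti ω l = X ω l)
    (hagreek : ∀ ω, ∀ l, l ≠ j → Xtk ω l = X ω l)
    (hle : MeasurableSpace.comap (fun ω (i : {i : Fin p // i ≠ j}) => X ω i.1)
        inferInstance ≤ mΩ)
    (hcondlawi : ∀ᵐ x ∂(P.map (fun ω (i : {i : Fin p // i ≠ j}) => X ω i.1)),
      condDistrib (fun ω => Xti ω j) (fun ω (i : {i : Fin p // i ≠ j}) => X ω i.1) P x
        = condDistrib (fun ω => X ω j) (fun ω (i : {i : Fin p // i ≠ j}) => X ω i.1) P x)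
    (hcondlawk : ∀ᵐ x ∂(P.map (fun ω (i : {i : Fin p // i ≠ j}) => X ω i.1)),
      condDistrib (fun ω => Xtk ω j) (fun ω (i : {i : Fin p // i ≠ j}) => X ω i.1) P x
        = condDistrib (fun ω => X ω j) (fun ω (i : {i : Fin p // i ≠ j}) => X ω i.1) P x)
    (hcondindep : iCondIndepFun
      (MeasurableSpace.comap (fun ω (i : {i : Fin p // i ≠ j}) => X ω i.1) inferInstance)
      hle (m := fun _ : Fin 3 => inferInstance)
      ![fun ω => X ω j, fun ω => Xti ω j, fun ω => Xtk ω j] P) :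
    (∫ ω, (m (X ω) - m (Xti ω)) * (m (X ω) - m (Xtk ω)) ∂P)
      = ∫ ω, (m (X ω)
          - (P[(fun ω => m (X ω)) |
              MeasurableSpace.comap (fun ω (i : {i : Fin p // i ≠ j}) => X ω i.1)
                inferInstance]) ω) ^ 2 ∂P := by
  haveI : SigmaFinite (P.trim hle) := by
    have := Fact.mk hle
    infer_instance
  set W : Ω → ({i : Fin p // i ≠ j} → ℝ) := fun ω (i : {i : Fin p // i ≠ j}) => X ω i.1
    with hWdef
  have hWm : Measurable W := measurable_pi_lambda _ fun i => (measurable_pi_apply i.1).comp hX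
  set Y : Ω → ℝ := fun ω => X ω j with hYdef
  set Yi : Ω → ℝ := fun ω => Xti ω j with hYidef
  set Yk : Ω → ℝ := fun ω => Xtk ω j with hYkdef
  have hYm : Measurable Y := (measurable_pi_apply j).comp hX
  have hYim : Measurable Yi := (measurable_pi_apply j).comp hXti
  have hYkm : Measurable Yk := (measurable_pi_apply j).comp hXtk
  -- the gluing function
  set glue : (({i : Fin p // i ≠ j} → ℝ) × ℝ) → (Fin p → ℝ) :=
    fun q i => if h : i = j then q.2 else q.1 ⟨i, h⟩ with hgluedef
  have hglue : Measurable glue := by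
    refine measurable_pi_lambda _ fun i => ?_
    by_cases h : i = j
    · simpa only [hgluedef, dif_pos h] using measurable_snd
    · simpa only [hgluedef, dif_neg h, Function.comp_def] using (measurable_pi_apply _).comp measurable_fst
  set f : (({i : Fin p // i ≠ j} → ℝ) × ℝ) → ℝ := fun q => m (glue q) with hfdef
  have hfsm : StronglyMeasurable f := (hm.comp hglue).stronglyMeasurable
  -- glue identities
  have hXeq : ∀ ω, glue (W ω, Y ω) = X ω := by
    intro ω; funext i
    by_cases h : i = j
    · simp only [hgluedef, dif_pos h, hYdef]; rw [h]
    · simp only [hgluedef, dif_neg h, hWdef]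
  have hXieq : ∀ ω, glue (W ω, Yi ω) = Xti ω := by
    intro ω; funext i
    by_cases h : i = j
    · simp only [hgluedef, dif_pos h, hYidef]; rw [h]
    · simp only [hgluedef, dif_neg h, hWdef]
      exact (hagreei ω i h).symm
  have hXkeq : ∀ ω, glue (W ω, Yk ω) = Xtk ω := by
    intro ω; funext i
    by_cases h : i = j
    · simp only [hgluedef, dif_pos h, hYkdef]; rw [h]
    · simp only [hgluedef, dif_neg h, hWdef]
      exact (hagreek ω i h).symm
  have hfun : (fun ω => m (X ω)) = fun ω => f (W ω, Y ω) := by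
    funext ω; rw [hfdef]; simp only [hXeq]
  have hfuni : (fun ω => m (Xti ω)) = fun ω => f (W ω, Yi ω) := by
    funext ω; rw [hfdef]; simp only [hXieq]
  have hfunk : (fun ω => m (Xtk ω)) = fun ω => f (W ω, Yk ω) := by
    funext ω; rw [hfdef]; simp only [hXkeq]
  -- L² facts
  have hL2Y : MemLp (fun ω => f (W ω, Y ω)) 2 P := hfun ▸ hmL2
  have hL2Yi : MemLp (fun ω => f (W ω, Yi ω)) 2 P :=
    memℒp_two_resample_aux P hWm hYim hYm hcondlawi hfsm hL2Y
  have hL2Yk : MemLp (fun ω => f (W ω, Yk ω)) 2 P :=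
    memℒp_two_resample_aux P hWm hYkm hYm hcondlawk hfsm hL2Y
  -- conditional independence of the pairs
  have hYYk : CondIndepFun (MeasurableSpace.comap W inferInstance) hle Y Yk P :=
    hcondindep.condIndepFun (i := 0) (j := 2) (by decide)
  have hYiY : CondIndepFun (MeasurableSpace.comap W inferInstance) hle Yi Y P :=
    hcondindep.condIndepFun (i := 1) (j := 0) (by decide)
  have hYiYk : CondIndepFun (MeasurableSpace.comap W inferInstance) hle Yi Yk P :=
    hcondindep.condIndepFun (i := 1) (j := 2) (by decide)
  -- the three cross terms
  have T1 := cross_term_eq_aux P hWm hYm hYkm hYm hle hYYk Filter.EventuallyEq.rfl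
    hcondlawk hfsm hL2Y
  have T2 := cross_term_eq_aux P hWm hYim hYm hYm hle hYiY hcondlawi
    Filter.EventuallyEq.rfl hfsm hL2Y
  have T3 := cross_term_eq_aux P hWm hYim hYkm hYm hle hYiYk hcondlawi
    hcondlawk hfsm hL2Y
  set μf : Ω → ℝ := fun ω => ∫ y, f (W ω, y) ∂(condDistrib Y W P (W ω)) with hμfdef
  -- conditional expectation
  set cE : Ω → ℝ := P[(fun ω => m (X ω)) | MeasurableSpace.comap W inferInstance] with hcEdef
  have hcE2 : MemLp cE 2 P := memℒp_two_condexp_aux hle hmL2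
  have haint : Integrable (fun ω => f (W ω, Y ω)) P := hL2Y.integrable one_le_two
  have hceq : cE =ᵐ[P] μf := by
    rw [hcEdef, hfun]
    exact condExp_prod_ae_eq_integral_condDistrib (μ := P) hWm hYm.aemeasurable hfsm haint
  -- orthogonality: ∫ cE * a = ∫ cE * cE
  have horth : ∫ ω, cE ω * f (W ω, Y ω) ∂P = ∫ ω, cE ω * cE ω ∂P := by
    have hintce : Integrable (fun ω => cE ω * f (W ω, Y ω)) P :=
      integrable_mul_of_memℒp_two_aux hcE2 hL2Y
    have hmul : P[(fun ω => cE ω * f (W ω, Y ω)) | MeasurableSpace.comap W inferInstance]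
        =ᵐ[P] fun ω => cE ω * cE ω := by
      have := condExp_mul_of_stronglyMeasurable_left (μ := P)
        (m := MeasurableSpace.comap W inferInstance)
        (f := cE) (g := fun ω => f (W ω, Y ω)) stronglyMeasurable_condExp hintce haint
      refine this.trans ?_
      have : P[(fun ω => f (W ω, Y ω)) | MeasurableSpace.comap W inferInstance]
          =ᵐ[P] cE := by
        rw [hcEdef, hfun]
      filter_upwards [this] with ω hω
      simp only [Pi.mul_apply, hω]
    calc ∫ ω, cE ω * f (W ω, Y ω) ∂P
        = ∫ ω, (P[(fun ω => cE ω * f (W ω, Y ω)) |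
            MeasurableSpace.comap W inferInstance]) ω ∂P := (integral_condExp hle).symm
      _ = ∫ ω, cE ω * cE ω ∂P := integral_congr_ae hmul
  -- integral of cE² equals integral of μf²
  have hcesq : ∫ ω, cE ω * cE ω ∂P = ∫ ω, μf ω ^ 2 ∂P := by
    refine integral_congr_ae ?_
    filter_upwards [hceq] with ω hω
    rw [hω, sq]
  -- integrabilities for the expansion
  have iaa : Integrable (fun ω => f (W ω, Y ω) * f (W ω, Y ω)) P :=
    integrable_mul_of_memℒp_two_aux hL2Y hL2Y
  have iak : Integrable (fun ω => f (W ω, Y ω) * f (W ω, Yk ω)) P :=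
    integrable_mul_of_memℒp_two_aux hL2Y hL2Yk
  have iia : Integrable (fun ω => f (W ω, Yi ω) * f (W ω, Y ω)) P :=
    integrable_mul_of_memℒp_two_aux hL2Yi hL2Y
  have iik : Integrable (fun ω => f (W ω, Yi ω) * f (W ω, Yk ω)) P :=
    integrable_mul_of_memℒp_two_aux hL2Yi hL2Yk
  have ica : Integrable (fun ω => cE ω * f (W ω, Y ω)) P :=
    integrable_mul_of_memℒp_two_aux hcE2 hL2Y
  have icc : Integrable (fun ω => cE ω * cE ω) P :=
    integrable_mul_of_memℒp_two_aux hcE2 hcE2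
  -- expand the left-hand side
  have hLHS : (∫ ω, (m (X ω) - m (Xti ω)) * (m (X ω) - m (Xtk ω)) ∂P)
      = (∫ ω, f (W ω, Y ω) * f (W ω, Y ω) ∂P) - ∫ ω, μf ω ^ 2 ∂P := by
    have hexp : (fun ω => (m (X ω) - m (Xti ω)) * (m (X ω) - m (Xtk ω)))
        = fun ω => f (W ω, Y ω) * f (W ω, Y ω) - f (W ω, Y ω) * f (W ω, Yk ω)
            - f (W ω, Yi ω) * f (W ω, Y ω) + f (W ω, Yi ω) * f (W ω, Yk ω) := by
      funext ω
      have e1 : m (X ω) = f (W ω, Y ω) := congrFun hfun ω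
      have e2 : m (Xti ω) = f (W ω, Yi ω) := congrFun hfuni ω
      have e3 : m (Xtk ω) = f (W ω, Yk ω) := congrFun hfunk ω
      rw [e1, e2, e3]; ring
    have i12 : Integrable (fun ω => f (W ω, Y ω) * f (W ω, Y ω)
        - f (W ω, Y ω) * f (W ω, Yk ω)) P := iaa.sub iak
    have i123 : Integrable (fun ω => f (W ω, Y ω) * f (W ω, Y ω)
        - f (W ω, Y ω) * f (W ω, Yk ω) - f (W ω, Yi ω) * f (W ω, Y ω)) P := i12.sub iia
    rw [hexp, integral_add i123 iik, integral_sub i12 iia,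
      integral_sub iaa iak, T1, T2, T3]
    ring
  -- expand the right-hand side
  have hRHS : (∫ ω, (m (X ω) - cE ω) ^ 2 ∂P)
      = (∫ ω, f (W ω, Y ω) * f (W ω, Y ω) ∂P) - ∫ ω, μf ω ^ 2 ∂P := by
    have hexp : (fun ω => (m (X ω) - cE ω) ^ 2)
        = fun ω => f (W ω, Y ω) * f (W ω, Y ω) - cE ω * f (W ω, Y ω)
            - cE ω * f (W ω, Y ω) + cE ω * cE ω := by
      funext ω
      have e1 : m (X ω) = f (W ω, Y ω) := congrFun hfun ω
      rw [e1]; ring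
    have i12 : Integrable (fun ω => f (W ω, Y ω) * f (W ω, Y ω)
        - cE ω * f (W ω, Y ω)) P := iaa.sub ica
    have i123 : Integrable (fun ω => f (W ω, Y ω) * f (W ω, Y ω)
        - cE ω * f (W ω, Y ω) - cE ω * f (W ω, Y ω)) P := i12.sub ica
    rw [hexp, integral_add i123 icc, integral_sub i12 ica,
      integral_sub iaa ica, horth, hcesq]
    ring
  rw [hLHS, ← hRHS]
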